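/- Let M = (E, I) be a matroid and let I, J ∈ I be independent sets with |I| ≥ |J|. Then there exists an injection π : J \ I → I \ J such that for every e ∈ J \ I, the set I − π(e) + e is independent. -/
import Mathlib


open scoped Classical
open Finset

/-- A matroid on a finite ground set `E`: a nonempty downward-closed family of
independent sets satisfying the exchange (augmentation) property. -/
structure FinMatroid (E : Type*) [DecidableEq E] [Fintype E] where
  Indep : Finset E → Prop
  empty_indep : Indep ∅
  subset_indep : ∀ ⦃S T : Finset E⦄, S ⊆ T → Indep T → Indep S
  exchange : ∀ ⦃S T : Finset E⦄, Indep S → Indep T → S.card < T.card →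
      ∃ e ∈ T \ S, Indep (insert e S)

variable {E : Type*} [DecidableEq E] [Fintype E]

/-- The rank of a set `S`: the (common, maximal) cardinality of maximal
independent subsets of `S`. -/
noncomputable def FinMatroid.rank (M : FinMatroid E) (S : Finset E) : ℕ :=
  (S.powerset.filter (fun I => M.Indep I)).sup Finset.card

/-- The span of a set `S`: the elements that do not increase the rank of `S`. -/
noncomputable def FinMatroid.span (M : FinMatroid E) (S : Finset E) : Finset E :=
  Finset.univ.filter (fun e => M.rank (insert e S) = M.rank S)

/-- Every independent subset of `Y` extends to a maximal one. -/
lemma FinMatroid.exists_maximal (M : FinMatroid E) (Y B : Finset E) (hB : M.Indep B)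
    (hBY : B ⊆ Y) :
    ∃ D, B ⊆ D ∧ D ⊆ Y ∧ M.Indep D ∧ ∀ g ∈ Y, g ∉ D → ¬ M.Indep (insert g D) := by
  obtain ⟨D, hD, hmax⟩ := Finset.exists_max_image
      (Y.powerset.filter fun C => M.Indep C ∧ B ⊆ C) Finset.card
      ⟨B, by simp [hB, hBY]⟩
  simp only [mem_filter, mem_powerset] at hD
  refine ⟨D, hD.2.2, hD.1, hD.2.1, ?_⟩
  intro g hg hgD hind
  have := hmax (insert g D) (by
    simp only [mem_filter, mem_powerset]
    exact ⟨insert_subset hg hD.1, hind, hD.2.2.trans (subset_insert _ _)⟩)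
  simp [Finset.card_insert_of_notMem hgD] at this

/-- A maximal independent subset of `Y` has at least the cardinality of any
independent subset of `Y`. -/
lemma FinMatroid.card_le_of_maximal (M : FinMatroid E) {Y D : Finset E}
    (hD : M.Indep D) (hmax : ∀ g ∈ Y, g ∉ D → ¬ M.Indep (insert g D))
    {C : Finset E} (hCY : C ⊆ Y) (hC : M.Indep C) : C.card ≤ D.card := by
  by_contra h
  obtain ⟨g, hg, hind⟩ := M.exchange hD hC (by omega)
  rw [Finset.mem_sdiff] at hg
  exact hmax g (hCY hg.1) hg.2 hind

/-- Augmentation to a near-basis: if `insert e X` is independent with `X ⊆ I`,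
`I` independent and `insert e I` dependent, then some `f ∈ I \ X` can be
exchanged for `e`. -/
lemma FinMatroid.aug (M : FinMatroid E) {I X : Finset E} {e : E} (hI : M.Indep I)
    (he : e ∉ I) (hXI : X ⊆ I) (hX : M.Indep (insert e X))
    (hdep : ¬ M.Indep (insert e I)) :
    ∃ f ∈ I, f ∉ X ∧ M.Indep (insert e (I.erase f)) := by
  obtain ⟨D, hsub, hDY, hDind, hmax⟩ := M.exists_maximal (insert e I) (insert e X) hX
      (insert_subset_insert _ hXI)
  have heD : e ∈ D := hsub (mem_insert_self _ _)
  have hDcard : D.card = I.card := by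
    have h1 : I.card ≤ D.card :=
      M.card_le_of_maximal hDind hmax (subset_insert _ _) hI
    have h2 : D.card ≤ I.card := by
      by_contra h
      have : insert e I ⊆ D := by
        apply Finset.eq_of_subset_of_card_le hDY _ |>.ge
        rw [Finset.card_insert_of_notMem he]; omega
      exact hdep (M.subset_indep this hDind)
    omega
  have hDe : D.erase e ⊆ I := by
    intro x hx
    rw [Finset.mem_erase] at hx
    rcases Finset.mem_insert.1 (hDY hx.2) with h | h
    · exact absurd h hx.1
    · exact h
  have hcarde : (D.erase e).card = I.card - 1 := by
    rw [Finset.card_erase_of_mem heD, hDcard]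
  have hIpos : 1 ≤ I.card := by
    have : 1 ≤ D.card := Finset.card_pos.2 ⟨e, heD⟩
    omega
  have hIne : ¬ I ⊆ D.erase e := by
    intro h
    have := Finset.card_le_card h
    omega
  obtain ⟨f, hfI, hfD⟩ := Finset.not_subset.1 hIne
  have hfD' : f ∉ D := by
    intro h
    exact hfD (Finset.mem_erase.2 ⟨fun hfe => he (hfe ▸ hfI), h⟩)
  have hfX : f ∉ X := fun h => hfD' (hsub (mem_insert_of_mem h))
  have hDeq : D.erase e = I.erase f := by
    apply Finset.eq_of_subset_of_card_le
    · intro x hx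
      exact Finset.mem_erase.2 ⟨fun hxf => hfD (hxf ▸ hx), hDe hx⟩
    · rw [Finset.card_erase_of_mem hfI, hcarde]
  have : insert e (I.erase f) = D := by
    rw [← hDeq, Finset.insert_erase heD]
  exact ⟨f, hfI, hfX, this ▸ hDind⟩

/-- If no element of `S` can be added to the independent set `P`, then every
independent subset of `P ∪ S` has cardinality at most `|P|`. -/
lemma FinMatroid.span_card_bound (M : FinMatroid E) {P S C : Finset E} (hP : M.Indep P)
    (hS : ∀ e ∈ S, ¬ M.Indep (insert e P)) (hC : M.Indep C) (hCY : C ⊆ P ∪ S) :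
    C.card ≤ P.card := by
  obtain ⟨D, hsub, hDY, hDind, hmax⟩ :=
    M.exists_maximal (P ∪ S) P hP Finset.subset_union_left
  have hDP : D.card ≤ P.card := by
    by_contra h
    obtain ⟨g, hg, hind⟩ := M.exchange hP hDind (by omega)
    rw [Finset.mem_sdiff] at hg
    rcases Finset.mem_union.1 (hDY hg.1) with h' | h'
    · exact hg.2 h'
    · exact hS g h' hind
  exact (M.card_le_of_maximal hDind hmax hCY hC).trans hDP

/-- Brualdi's exchange lemma: for independent sets `I`, `J` with
`|I| ≥ |J|`, there is an injection `π : J \ I → I \ J` such that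
`I − π(e) + e` is independent for every `e ∈ J \ I`. -/
theorem brualdi_exchange (M : FinMatroid E) (I J : Finset E)
    (hI : M.Indep I) (hJ : M.Indep J) (hcard : J.card ≤ I.card) :
    ∃ π : E → E,
      Set.InjOn π ↑(J \ I) ∧
      (∀ e ∈ J \ I, π e ∈ I \ J) ∧
      (∀ e ∈ J \ I, M.Indep (insert e (I.erase (π e)))) := by
  set t : {x // x ∈ J \ I} → Finset E :=
    fun e => (I \ J).filter (fun f => M.Indep (insert e.1 (I.erase f))) with ht
  have hJI_card : (J \ I).card ≤ (I \ J).card := by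
    have h1 := Finset.card_sdiff_add_card_inter J I
    have h2 := Finset.card_sdiff_add_card_inter I J
    rw [Finset.inter_comm] at h1
    omega
  have hall : ∀ s : Finset {x // x ∈ J \ I}, s.card ≤ (s.biUnion t).card := by
    intro s
    set S : Finset E := s.image Subtype.val with hSdef
    have hScard : S.card = s.card := Finset.card_image_of_injective _ Subtype.val_injective
    have hSJI : S ⊆ J \ I := by
      intro x hx
      obtain ⟨e, _, rfl⟩ := Finset.mem_image.1 hx
      exact e.2
    by_cases hcase : ∃ e ∈ s, M.Indep (insert e.1 I)
    · obtain ⟨e, hes, hind⟩ := hcase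
      have hsub : I \ J ⊆ s.biUnion t := by
        intro f hf
        refine Finset.mem_biUnion.2 ⟨e, hes, Finset.mem_filter.2 ⟨hf, ?_⟩⟩
        exact M.subset_indep (Finset.insert_subset_insert _ (Finset.erase_subset _ _)) hind
      calc s.card = S.card := hScard.symm
        _ ≤ (J \ I).card := Finset.card_le_card hSJI
        _ ≤ (I \ J).card := hJI_card
        _ ≤ (s.biUnion t).card := Finset.card_le_card hsub
    · push_neg at hcase
      set P : Finset E := (I ∩ J) ∪ s.biUnion t with hPdef
      have htIJ : ∀ e ∈ s, t e ⊆ I \ J := fun e _ => Finset.filter_subset _ _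
      have hPI : P ⊆ I := by
        intro x hx
        rcases Finset.mem_union.1 hx with h | h
        · exact (Finset.mem_inter.1 h).1
        · obtain ⟨e, hes, hxe⟩ := Finset.mem_biUnion.1 h
          exact (Finset.mem_sdiff.1 (htIJ e hes hxe)).1
      have hPind : M.Indep P := M.subset_indep hPI hI
      have hkey : ∀ e ∈ S, ¬ M.Indep (insert e P) := by
        intro e heS hind
        obtain ⟨e', he's, rfl⟩ := Finset.mem_image.1 heS
        have heJI := e'.2
        have heI : e'.1 ∉ I := (Finset.mem_sdiff.1 heJI).2
        obtain ⟨f, hfI, hfP, hvalid⟩ := M.aug hI heI hPI hind (hcase e' he's)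
        apply hfP
        by_cases hfJ : f ∈ J
        · exact Finset.mem_union_left _ (Finset.mem_inter.2 ⟨hfI, hfJ⟩)
        · exact Finset.mem_union_right _ (Finset.mem_biUnion.2
            ⟨e', he's, Finset.mem_filter.2 ⟨Finset.mem_sdiff.2 ⟨hfI, hfJ⟩, hvalid⟩⟩)
      have hCind : M.Indep ((I ∩ J) ∪ S) := by
        apply M.subset_indep _ hJ
        intro x hx
        rcases Finset.mem_union.1 hx with h | h
        · exact (Finset.mem_inter.1 h).2
        · exact (Finset.mem_sdiff.1 (hSJI h)).1
      have hCsub : (I ∩ J) ∪ S ⊆ P ∪ S := by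
        apply Finset.union_subset_union_left
        exact Finset.subset_union_left
      have hbound := M.span_card_bound hPind hkey hCind hCsub
      have hdisj : Disjoint (I ∩ J) S := by
        rw [Finset.disjoint_left]
        intro x hx hxS
        exact (Finset.mem_sdiff.1 (hSJI hxS)).2 (Finset.mem_inter.1 hx).1
      rw [Finset.card_union_of_disjoint hdisj] at hbound
      have hPle : P.card ≤ (I ∩ J).card + (s.biUnion t).card := Finset.card_union_le _ _
      omega
  obtain ⟨f, hfinj, hft⟩ := (Finset.all_card_le_biUnion_card_iff_exists_injective t).1 hall
  refine ⟨fun x => if h : x ∈ J \ I then f ⟨x, h⟩ else x, ?_, ?_, ?_⟩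
  · intro x hx y hy hxy
    rw [Finset.mem_coe] at hx hy
    simp only [dif_pos hx, dif_pos hy] at hxy
    exact congrArg Subtype.val (hfinj hxy)
  · intro e he
    simp only [dif_pos he]
    exact (Finset.mem_filter.1 (hft ⟨e, he⟩)).1
  · intro e he
    simp only [dif_pos he]
    exact (Finset.mem_filter.1 (hft ⟨e, he⟩)).2
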